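/- Let A be an abelian category with enough projectives. Then the category of ℤ-indexed chain complexes over A has enough projectives, and a chain complex P is a projective object of this category if and only if P is contractible and each component P_n is a projective object of A. -/

import Mathlib

open CategoryTheory

namespace ChEPAux

open CategoryTheory Limits HomologicalComplex

variable {A : Type u} [Category.{v} A] [Abelian A]

/-- The "sum of disks" complex on a family `Q : ℤ → A`:
`E Q` has `Q n ⊞ Q (n+1)` in degree `n`, with differential `(a, b) ↦ (0, a)`. -/
noncomputable abbrev E (Q : ℤ → A) : ChainComplex A ℤ :=
  ChainComplex.of (fun n => Q n ⊞ Q (n + 1)) (fun n => biprod.fst ≫ biprod.inr)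
    (fun n => by simp)

lemma E_d (Q : ℤ → A) (n : ℤ) :
    (E Q).d (n + 1) n = (biprod.fst ≫ biprod.inr :
      Q (n + 1) ⊞ Q (n + 1 + 1) ⟶ Q n ⊞ Q (n + 1)) :=
  ChainComplex.of_d (fun n => Q n ⊞ Q (n + 1)) (fun n => biprod.fst ≫ biprod.inr) n

/-- The canonical chain map `E Q ⟶ C` induced by maps `p n : Q n ⟶ C.X n`. -/
noncomputable def eHom (Q : ℤ → A) (C : ChainComplex A ℤ) (p : ∀ n, Q n ⟶ C.X n) :
    E Q ⟶ C where
  f n := biprod.desc (p n) (p (n + 1) ≫ C.d (n + 1) n)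
  comm' i j hij := by
    obtain rfl : j + 1 = i := hij
    rw [E_d]
    apply biprod.hom_ext' <;> simp

instance eHom_epi (Q : ℤ → A) (C : ChainComplex A ℤ) (p : ∀ n, Q n ⟶ C.X n)
    [∀ n, Epi (p n)] : Epi (eHom Q C p) := by
  apply HomologicalComplex.epi_of_epi_f
  intro i
  exact epi_of_epi_fac (biprod.inl_desc (p i) (p (i + 1) ≫ C.d (i + 1) i))

/-- `E Q` is contractible. -/
noncomputable def EHomotopy (Q : ℤ → A) : Homotopy (𝟙 (E Q)) 0 where
  hom i j :=
    if h : j = i + 1 then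
      ((biprod.snd ≫ biprod.inl : Q i ⊞ Q (i + 1) ⟶ Q (i + 1) ⊞ Q (i + 1 + 1)) ≫
        eqToHom (congrArg (E Q).X h.symm))
    else 0
  zero i j h := dif_neg (fun hj => h (by simpa [ComplexShape.down_Rel] using hj.symm))
  comm i := by
    obtain ⟨j, rfl⟩ : ∃ j, j + 1 = i := ⟨i - 1, by ring⟩
    rw [dNext_eq _ (show (ComplexShape.down ℤ).Rel (j + 1) j from rfl),
      prevD_eq _ (show (ComplexShape.down ℤ).Rel (j + 1 + 1) (j + 1) from rfl)]
    rw [dif_pos rfl, dif_pos rfl, E_d, E_d]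
    apply biprod.hom_ext' <;> apply biprod.hom_ext <;>
      simp [show 𝟙 ((E Q).X (j + 1)) = 𝟙 (Q (j + 1) ⊞ Q (j + 1 + 1)) from rfl]

/-- `E Q` is projective if each `Q n` is. -/
theorem E_projective (Q : ℤ → A) [∀ n, Projective (Q n)] : Projective (E Q) where
  factors {Z X} f e he := by
    haveI := he
    refine ⟨HomologicalComplex.Hom.mk
      (fun n => biprod.desc (Projective.factorThru (biprod.inl ≫ f.f n) (e.f n))
        (Projective.factorThru (biprod.inl ≫ f.f (n + 1)) (e.f (n + 1)) ≫ Z.d (n + 1) n)) ?_, ?_⟩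
    · intro i j hij
      obtain rfl : j + 1 = i := hij
      rw [E_d]
      apply biprod.hom_ext' <;> simp
    · ext n : 1
      apply biprod.hom_ext'
      · simp
      · have hf : biprod.inr ≫ f.f n = biprod.inl ≫ (f.f (n + 1) ≫ X.d (n + 1) n) := by
          rw [f.comm (n + 1) n, E_d]
          simp
        have hcomm := e.comm (n + 1) n
        simp only [HomologicalComplex.comp_f, ← Category.assoc, biprod.inr_desc]
        rw [Category.assoc, ← hcomm, ← Category.assoc, Projective.factorThru_comp,
          Category.assoc, ← hf]

/-- If `C` is contractible, it is a retract of `E C.X`: a splitting of the canonical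
epimorphism `eHom C.X C (fun n => 𝟙 _)`. -/
noncomputable def split (C : ChainComplex A ℤ) (H : Homotopy (𝟙 C) 0) : C ⟶ E C.X where
  f n := biprod.lift (𝟙 (C.X n) - H.hom n (n + 1) ≫ C.d (n + 1) n) (H.hom n (n + 1))
  comm' i j hij := by
    obtain rfl : j + 1 = i := hij
    have key : 𝟙 (C.X (j + 1)) =
        C.d (j + 1) j ≫ H.hom j (j + 1) +
          H.hom (j + 1) (j + 1 + 1) ≫ C.d (j + 1 + 1) (j + 1) := by
      have := H.comm (j + 1)
      rwa [dNext_eq _ (show (ComplexShape.down ℤ).Rel (j + 1) j from rfl),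
        prevD_eq _ (show (ComplexShape.down ℤ).Rel (j + 1 + 1) (j + 1) from rfl),
        HomologicalComplex.id_f, HomologicalComplex.zero_f, add_zero] at this
    rw [E_d]
    apply biprod.hom_ext
    · have hd : C.d (j + 1) j ≫ H.hom j (j + 1) ≫ C.d (j + 1) j = C.d (j + 1) j := by
        conv_rhs => rw [← Category.id_comp (C.d (j + 1) j), key]
        simp
      simp [Preadditive.comp_sub, Preadditive.sub_comp, hd]
    · have hs : 𝟙 (C.X (j + 1)) - H.hom (j + 1) (j + 1 + 1) ≫ C.d (j + 1 + 1) (j + 1) =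
          C.d (j + 1) j ≫ H.hom j (j + 1) := by rw [key]; abel
      simp [hs]

lemma split_eHom (C : ChainComplex A ℤ) (H : Homotopy (𝟙 C) 0) :
    split C H ≫ eHom C.X C (fun _ => 𝟙 _) = 𝟙 C := by
  ext n
  simp [split, eHom]

end ChEPAux

open ChEPAux CategoryTheory.Limits

/-- If an abelian category `A` has enough projectives, then so does the category of
`ℤ`-indexed chain complexes over `A`, and a complex is a projective object if and only if it
is contractible with projective components. -/
theorem enoughProjectives_chainComplex_and_projective_iff
    {A : Type u} [Category.{v} A] [Abelian A] [EnoughProjectives A] :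
    EnoughProjectives (ChainComplex A ℤ) ∧
      ∀ (P : ChainComplex A ℤ),
        Projective P ↔ (Nonempty (Homotopy (𝟙 P) 0) ∧ ∀ n : ℤ, Projective (P.X n)) := by
  constructor
  · refine ⟨fun C => ⟨?_⟩⟩
    haveI := E_projective (fun n => Projective.over (C.X n))
    exact ⟨E (fun n => Projective.over (C.X n)), eHom _ C (fun n => Projective.π _)⟩
  · intro P
    constructor
    · intro hP
      set Q : ℤ → A := fun n => Projective.over (P.X n) with hQ
      let e : E Q ⟶ P := eHom Q P (fun n => Projective.π _)
      haveI : Epi e := inferInstance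
      haveI hPE : Projective (E Q) := E_projective Q
      let s : P ⟶ E Q := Projective.factorThru (𝟙 P) e
      have hse : s ≫ e = 𝟙 P := Projective.factorThru_comp _ _
      constructor
      · exact ⟨(Homotopy.ofEq (by rw [← hse]; simp)).trans
          ((((EHomotopy Q).compLeft s).compRight e).trans (Homotopy.ofEq (by simp)))⟩
      · intro n
        have hsn : s.f n ≫ e.f n = 𝟙 (P.X n) := by
          have := HomologicalComplex.congr_hom hse n
          simpa using this
        haveI hEn : Projective ((E Q).X n) :=
          show Projective (Q n ⊞ Q (n + 1)) from inferInstance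
        exact ⟨fun f g hg => by
          haveI := hg
          refine ⟨s.f n ≫ Projective.factorThru (e.f n ≫ f) g, ?_⟩
          rw [Category.assoc, Projective.factorThru_comp, ← Category.assoc, hsn,
            Category.id_comp]⟩
    · rintro ⟨⟨H⟩, hproj⟩
      haveI : ∀ n, Projective (P.X n) := hproj
      haveI hPE : Projective (E P.X) := E_projective P.X
      exact ⟨fun f g hg => by
        haveI := hg
        refine ⟨split P H ≫ Projective.factorThru (eHom P.X P (fun _ => 𝟙 _) ≫ f) g, ?_⟩
        rw [Category.assoc, Projective.factorThru_comp, ← Category.assoc, split_eHom,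
          Category.id_comp]⟩
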